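/- Suppose κ̂²(S₀) := min{ s₀·‖Xb‖₂²/n : ‖b_{S₀}‖₁ − ‖b_{−S₀}‖₁ = 1 } > 0, let b* attain this minimum and z*_j = sign(b*_j) for j ∈ S₀. If β⁰ (with support S₀, |S₀| = s₀) satisfies z*_j β⁰_j > z*_j b*_j · s₀ λ* / (n κ̂²(S₀)) for all j ∈ S₀, then there exists β* solving the noiseless Lasso KKT conditions X^T X(β* − β⁰) + λ* ζ* = 0 with ζ* ∈ ∂‖β*‖₁, such that ‖X(β* − β⁰)‖₂² = s₀ λ*² / (n κ̂²(S₀)). -/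

import Mathlib

open Finset

-- one-sided limit lemma
lemma aux_onesided (A B δ : ℝ) (hδ : 0 < δ) (h : ∀ ε : ℝ, 0 < ε → ε < δ → 0 ≤ A + B * ε) : 0 ≤ A := by
  by_contra h'
  push_neg at h'
  set ε : ℝ := min (δ/2) (-A/(|B|+1)) with hε
  have hB : (0:ℝ) < |B| + 1 := by positivity
  have hε0 : 0 < ε := by
    exact lt_min (by linarith) (div_pos (by linarith) hB)
  have hεδ : ε < δ := lt_of_le_of_lt (min_le_left _ _) (by linarith)
  have h1 := h ε hε0 hεδ
  have h2 : B * ε ≤ |B| * ε := mul_le_mul_of_nonneg_right (le_abs_self B) hε0.le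
  have h3 : ε ≤ -A/(|B|+1) := min_le_right _ _
  have h4 : |B| * ε ≤ |B| * (-A/(|B|+1)) := mul_le_mul_of_nonneg_left h3 (abs_nonneg B)
  have h5 : |B| * (-A/(|B|+1)) < -A := by
    rw [mul_div_assoc']
    rw [div_lt_iff₀ hB]
    nlinarith [abs_nonneg B]
  linarith


noncomputable def l1 {p : ℕ} (b : Fin p → ℝ) : ℝ := ∑ j, |b j|

def restr {p : ℕ} (S : Finset (Fin p)) (b : Fin p → ℝ) : Fin p → ℝ :=
  fun j => if j ∈ S then b j else 0

noncomputable def qf {n p : ℕ} (X : Matrix (Fin n) (Fin p) ℝ) (b : Fin p → ℝ) : ℝ :=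
  ∑ i, (X.mulVec b i) ^ 2

lemma g_eq {p : ℕ} (S : Finset (Fin p)) (b : Fin p → ℝ) :
    l1 (restr S b) - l1 (restr Sᶜ b) = ∑ k, (if k ∈ S then |b k| else -|b k|) := by
  rw [l1, l1, ← Finset.sum_sub_distrib]
  apply Finset.sum_congr rfl
  intro k _
  by_cases h : k ∈ S <;> simp [restr, h]

lemma qf_expand {n p : ℕ} (X : Matrix (Fin n) (Fin p) ℝ) (b : Fin p → ℝ) (ε : ℝ) (j : Fin p) :
    qf X (fun k => b k + ε * (if k = j then 1 else 0)) =
      qf X b + 2 * ε * ((X.transpose * X).mulVec b j) + ε ^ 2 * (∑ i, (X i j) ^ 2) := by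
  have hmv : ∀ i, X.mulVec (fun k => b k + ε * (if k = j then 1 else 0)) i
      = X.mulVec b i + ε * X i j := by
    intro i
    simp [Matrix.mulVec, dotProduct, mul_add, Finset.sum_add_distrib, mul_ite,
      Finset.mul_sum, mul_comm, mul_assoc]
  have hc : (X.transpose * X).mulVec b j = ∑ i, X i j * X.mulVec b i := by
    rw [← Matrix.mulVec_mulVec]
    simp [Matrix.mulVec, dotProduct, Matrix.transpose_apply]
  rw [qf, qf, hc]
  simp only [hmv]
  rw [Finset.mul_sum, Finset.mul_sum, ← Finset.sum_add_distrib, ← Finset.sum_add_distrib]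
  apply Finset.sum_congr rfl
  intro i _
  ring

lemma g_update {p : ℕ} (S : Finset (Fin p)) (b : Fin p → ℝ) (ε : ℝ) (j : Fin p) :
    (∑ k, (if k ∈ S then |b k + ε * (if k = j then 1 else 0)| else -|b k + ε * (if k = j then 1 else 0)|))
    = (∑ k, (if k ∈ S then |b k| else -|b k|))
      - (if j ∈ S then |b j| else -|b j|) + (if j ∈ S then |b j + ε| else -|b j + ε|) := by
  rw [Finset.sum_eq_sum_sdiff_singleton_add (Finset.mem_univ j),
      Finset.sum_eq_sum_sdiff_singleton_add (Finset.mem_univ j)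
        (fun k => (if k ∈ S then |b k| else -|b k|))]
  have : ∀ k ∈ Finset.univ \ {j},
      (if k ∈ S then |b k + ε * (if k = j then 1 else 0)| else -|b k + ε * (if k = j then 1 else 0)|)
      = (if k ∈ S then |b k| else -|b k|) := by
    intro k hk
    rw [Finset.mem_sdiff, Finset.mem_singleton] at hk
    simp [hk.2]
  rw [Finset.sum_congr rfl this]
  simp

lemma qf_smul {n p : ℕ} (X : Matrix (Fin n) (Fin p) ℝ) (c : ℝ) (b : Fin p → ℝ) :
    qf X (c • b) = c ^ 2 * qf X b := by
  rw [qf, qf, Finset.mul_sum]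
  apply Finset.sum_congr rfl
  intro i _
  rw [Matrix.mulVec_smul]
  simp [smul_eq_mul]
  ring

lemma g_smul {p : ℕ} (S : Finset (Fin p)) (c : ℝ) (hc : 0 ≤ c) (b : Fin p → ℝ) :
    l1 (restr S (c • b)) - l1 (restr Sᶜ (c • b)) = c * (l1 (restr S b) - l1 (restr Sᶜ b)) := by
  rw [g_eq, g_eq, Finset.mul_sum]
  apply Finset.sum_congr rfl
  intro k _
  by_cases h : k ∈ S <;> simp [h, abs_mul, abs_of_nonneg hc]

lemma perturb {n p : ℕ} (X : Matrix (Fin n) (Fin p) ℝ) (S0 : Finset (Fin p))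
    (bstar : Fin p → ℝ)
    (hcon : l1 (restr S0 bstar) - l1 (restr S0ᶜ bstar) = 1)
    (hmin : ∀ b : Fin p → ℝ, l1 (restr S0 b) - l1 (restr S0ᶜ b) = 1 →
      qf X bstar ≤ qf X b)
    (j : Fin p) (ε : ℝ)
    (hγ : 0 < 1 - (if j ∈ S0 then |bstar j| else -|bstar j|)
        + (if j ∈ S0 then |bstar j + ε| else -|bstar j + ε|)) :
    qf X bstar * (1 - (if j ∈ S0 then |bstar j| else -|bstar j|)
        + (if j ∈ S0 then |bstar j + ε| else -|bstar j + ε|)) ^ 2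
      ≤ qf X bstar + 2 * ε * ((X.transpose * X).mulVec bstar j)
        + ε ^ 2 * (∑ i, (X i j) ^ 2) := by
  set γ := 1 - (if j ∈ S0 then |bstar j| else -|bstar j|)
      + (if j ∈ S0 then |bstar j + ε| else -|bstar j + ε|) with hγdef
  set b' : Fin p → ℝ := fun k => bstar k + ε * (if k = j then 1 else 0) with hb'
  have hGb' : l1 (restr S0 b') - l1 (restr S0ᶜ b') = γ := by
    rw [g_eq, hb', g_update]
    rw [g_eq] at hcon
    rw [hcon]
  have h1 : l1 (restr S0 (γ⁻¹ • b')) - l1 (restr S0ᶜ (γ⁻¹ • b')) = 1 := by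
    rw [g_smul _ _ (inv_nonneg.mpr hγ.le), hGb', inv_mul_cancel₀ (ne_of_gt hγ)]
  have h2 := hmin _ h1
  rw [qf_smul] at h2
  have h3 : qf X bstar * γ ^ 2 ≤ qf X b' := by
    have := mul_le_mul_of_nonneg_right h2 (sq_nonneg γ)
    calc qf X bstar * γ ^ 2 ≤ γ⁻¹ ^ 2 * qf X b' * γ ^ 2 := this
      _ = qf X b' := by field_simp
  calc qf X bstar * γ ^ 2 ≤ qf X b' := h3
    _ = _ := by rw [hb', qf_expand]

lemma quad_zero (A B δ : ℝ) (hδ : 0 < δ) (h : ∀ ε : ℝ, |ε| < δ → 0 ≤ A * ε + B * ε ^ 2) :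
    A = 0 := by
  have h1 : 0 ≤ A := aux_onesided A B δ hδ (fun ε he1 he2 => by
    have := h ε (by rw [abs_of_pos he1]; exact he2); nlinarith)
  have h2 : 0 ≤ -A := aux_onesided (-A) B δ hδ (fun ε he1 he2 => by
    have := h (-ε) (by rw [abs_neg, abs_of_pos he1]; exact he2); nlinarith)
  linarith

lemma coordA {n p : ℕ} (X : Matrix (Fin n) (Fin p) ℝ) (S0 : Finset (Fin p))
    (bstar : Fin p → ℝ)
    (hcon : l1 (restr S0 bstar) - l1 (restr S0ᶜ bstar) = 1)
    (hmin : ∀ b : Fin p → ℝ, l1 (restr S0 b) - l1 (restr S0ᶜ b) = 1 →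
      qf X bstar ≤ qf X b)
    (j : Fin p) (hj : j ∈ S0) (hbj : bstar j ≠ 0) :
    ((X.transpose * X).mulVec bstar) j = qf X bstar * Real.sign (bstar j) := by
  set Q := qf X bstar with hQdef
  set c := ((X.transpose * X).mulVec bstar) j with hcdef
  set d := ∑ i, (X i j) ^ 2 with hddef
  rcases hbj.lt_or_gt with hneg | hpos
  · rw [Real.sign_of_neg hneg]
    have key : ∀ ε : ℝ, |ε| < min (-bstar j) (1/2) → 0 ≤ (2*(c + Q)) * ε + (d - Q) * ε ^ 2 := by
      intro ε hε
      rw [lt_min_iff] at hε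
      obtain ⟨hε1, hε2⟩ := hε
      obtain ⟨hεa, hεb⟩ := abs_lt.mp hε1
      obtain ⟨hεc, hεd⟩ := abs_lt.mp hε2
      have habs : |bstar j + ε| = -(bstar j + ε) := abs_of_neg (by linarith)
      have habs0 : |bstar j| = -bstar j := abs_of_neg hneg
      have hγpos : (0:ℝ) < 1 - |bstar j| + |bstar j + ε| := by
        rw [habs, habs0]; linarith
      have hper := perturb X S0 bstar hcon hmin j ε (by simp only [if_pos hj]; exact hγpos)
      simp only [if_pos hj] at hper
      rw [habs, habs0] at hper
      nlinarith [hper]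
    have := quad_zero (2*(c + Q)) (d - Q) _ (lt_min (neg_pos.mpr hneg) (by norm_num)) key
    linarith
  · rw [Real.sign_of_pos hpos]
    have key : ∀ ε : ℝ, |ε| < min (bstar j) (1/2) → 0 ≤ (2*(c - Q)) * ε + (d - Q) * ε ^ 2 := by
      intro ε hε
      rw [lt_min_iff] at hε
      obtain ⟨hε1, hε2⟩ := hε
      obtain ⟨hεa, hεb⟩ := abs_lt.mp hε1
      obtain ⟨hεc, hεd⟩ := abs_lt.mp hε2
      have habs : |bstar j + ε| = bstar j + ε := abs_of_pos (by linarith)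
      have habs0 : |bstar j| = bstar j := abs_of_pos hpos
      have hγpos : (0:ℝ) < 1 - |bstar j| + |bstar j + ε| := by
        rw [habs, habs0]; linarith
      have hper := perturb X S0 bstar hcon hmin j ε (by simp only [if_pos hj]; exact hγpos)
      simp only [if_pos hj] at hper
      rw [habs, habs0] at hper
      nlinarith [hper]
    have := quad_zero (2*(c - Q)) (d - Q) _ (lt_min hpos (by norm_num)) key
    linarith

lemma coordB {n p : ℕ} (X : Matrix (Fin n) (Fin p) ℝ) (S0 : Finset (Fin p))
    (bstar : Fin p → ℝ)
    (hcon : l1 (restr S0 bstar) - l1 (restr S0ᶜ bstar) = 1)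
    (hmin : ∀ b : Fin p → ℝ, l1 (restr S0 b) - l1 (restr S0ᶜ b) = 1 →
      qf X bstar ≤ qf X b)
    (j : Fin p) (hj : j ∉ S0) (hbj : bstar j ≠ 0) :
    ((X.transpose * X).mulVec bstar) j = -(qf X bstar * Real.sign (bstar j)) := by
  set Q := qf X bstar with hQdef
  set c := ((X.transpose * X).mulVec bstar) j with hcdef
  set d := ∑ i, (X i j) ^ 2 with hddef
  rcases hbj.lt_or_gt with hneg | hpos
  · rw [Real.sign_of_neg hneg]
    have key : ∀ ε : ℝ, |ε| < min (-bstar j) (1/2) → 0 ≤ (2*(c - Q)) * ε + (d - Q) * ε ^ 2 := by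
      intro ε hε
      rw [lt_min_iff] at hε
      obtain ⟨hε1, hε2⟩ := hε
      obtain ⟨hεa, hεb⟩ := abs_lt.mp hε1
      obtain ⟨hεc, hεd⟩ := abs_lt.mp hε2
      have habs : |bstar j + ε| = -(bstar j + ε) := abs_of_neg (by linarith)
      have habs0 : |bstar j| = -bstar j := abs_of_neg hneg
      have hγpos : (0:ℝ) < 1 - (-|bstar j|) + (-|bstar j + ε|) := by
        rw [habs, habs0]; linarith
      have hper := perturb X S0 bstar hcon hmin j ε (by simp only [if_neg hj]; exact hγpos)
      simp only [if_neg hj] at hper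
      rw [habs, habs0] at hper
      nlinarith [hper]
    have := quad_zero (2*(c - Q)) (d - Q) _ (lt_min (neg_pos.mpr hneg) (by norm_num)) key
    linarith
  · rw [Real.sign_of_pos hpos]
    have key : ∀ ε : ℝ, |ε| < min (bstar j) (1/2) → 0 ≤ (2*(c + Q)) * ε + (d - Q) * ε ^ 2 := by
      intro ε hε
      rw [lt_min_iff] at hε
      obtain ⟨hε1, hε2⟩ := hε
      obtain ⟨hεa, hεb⟩ := abs_lt.mp hε1
      obtain ⟨hεc, hεd⟩ := abs_lt.mp hε2
      have habs : |bstar j + ε| = bstar j + ε := abs_of_pos (by linarith)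
      have habs0 : |bstar j| = bstar j := abs_of_pos hpos
      have hγpos : (0:ℝ) < 1 - (-|bstar j|) + (-|bstar j + ε|) := by
        rw [habs, habs0]; linarith
      have hper := perturb X S0 bstar hcon hmin j ε (by simp only [if_neg hj]; exact hγpos)
      simp only [if_neg hj] at hper
      rw [habs, habs0] at hper
      nlinarith [hper]
    have := quad_zero (2*(c + Q)) (d - Q) _ (lt_min hpos (by norm_num)) key
    linarith

lemma coordC {n p : ℕ} (X : Matrix (Fin n) (Fin p) ℝ) (S0 : Finset (Fin p))
    (bstar : Fin p → ℝ)
    (hcon : l1 (restr S0 bstar) - l1 (restr S0ᶜ bstar) = 1)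
    (hmin : ∀ b : Fin p → ℝ, l1 (restr S0 b) - l1 (restr S0ᶜ b) = 1 →
      qf X bstar ≤ qf X b)
    (j : Fin p) (hj : j ∉ S0) (hbj : bstar j = 0) :
    |((X.transpose * X).mulVec bstar) j| ≤ qf X bstar := by
  set Q := qf X bstar with hQdef
  set c := ((X.transpose * X).mulVec bstar) j with hcdef
  set d := ∑ i, (X i j) ^ 2 with hddef
  have key : ∀ ε : ℝ, |ε| < 1/2 → 0 ≤ 2*Q*|ε| + 2*c*ε + (d - Q) * ε ^ 2 := by
    intro ε hε
    have hγpos : (0:ℝ) < 1 - (-|bstar j|) + (-|bstar j + ε|) := by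
      rw [hbj]; simp; linarith [abs_lt.mp hε]
    have hper := perturb X S0 bstar hcon hmin j ε (by simp only [if_neg hj]; exact hγpos)
    simp only [if_neg hj] at hper
    rw [hbj] at hper
    simp only [zero_add, abs_zero, neg_zero] at hper
    rw [← hQdef, ← hcdef, ← hddef] at hper
    have hq : Q * |ε| ^ 2 = Q * ε ^ 2 := by rw [sq_abs]
    nlinarith [hper, abs_nonneg ε, hq]
  rw [abs_le]
  constructor
  · have := aux_onesided (2*(Q + c)) (d - Q) (1/2) (by norm_num) (fun ε he1 he2 => by
      have hk := key ε (by rw [abs_of_pos he1]; exact he2)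
      rw [abs_of_pos he1] at hk
      nlinarith)
    linarith
  · have := aux_onesided (2*(Q - c)) (d - Q) (1/2) (by norm_num) (fun ε he1 he2 => by
      have hk := key (-ε) (by rw [abs_neg, abs_of_pos he1]; exact he2)
      rw [abs_neg, abs_of_pos he1] at hk
      nlinarith)
    linarith

theorem stmt7 {n p : ℕ} (X : Matrix (Fin n) (Fin p) ℝ)
    (lam : ℝ) (hlam : 0 < lam)
    (beta0 : Fin p → ℝ) (S0 : Finset (Fin p))
    (hS0 : ∀ j, j ∈ S0 ↔ beta0 j ≠ 0)
    (bstar : Fin p → ℝ)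
    (hcon : l1 (restr S0 bstar) - l1 (restr S0ᶜ bstar) = 1)
    (hmin : ∀ b : Fin p → ℝ, l1 (restr S0 b) - l1 (restr S0ᶜ b) = 1 →
      qf X bstar ≤ qf X b)
    (hk : 0 < (S0.card : ℝ) * qf X bstar / n)
    (hbeta : ∀ j ∈ S0,
      Real.sign (bstar j) * beta0 j >
        Real.sign (bstar j) * bstar j * (S0.card : ℝ) * lam /
          ((n : ℝ) * ((S0.card : ℝ) * qf X bstar / n))) :
    ∃ betastar zeta : Fin p → ℝ,
      (∀ j, ((X.transpose * X).mulVec (betastar - beta0)) j + lam * zeta j = 0) ∧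
      (∀ j, |zeta j| ≤ 1) ∧
      (∑ j, zeta j * betastar j) = l1 betastar ∧
      qf X (betastar - beta0) =
        (S0.card : ℝ) * lam ^ 2 / ((n : ℝ) * ((S0.card : ℝ) * qf X bstar / n)) := by
  have hQ0 : 0 ≤ qf X bstar := Finset.sum_nonneg (fun i _ => sq_nonneg _)
  have hn : 0 < (n : ℝ) := by
    rcases Nat.eq_zero_or_pos n with h | h
    · subst h; simp at hk
    · exact_mod_cast h
  have hsQ : 0 < (S0.card : ℝ) * qf X bstar := by
    have := mul_pos hk hn
    rwa [div_mul_cancel₀ _ (ne_of_gt hn)] at this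
  have hQpos : 0 < qf X bstar := by
    rcases (mul_pos_iff.mp hsQ) with ⟨_, h⟩ | ⟨h, _⟩
    · exact h
    · exact absurd h (not_lt.mpr (Nat.cast_nonneg _))
  have hs : 0 < (S0.card : ℝ) := by nlinarith
  set Q := qf X bstar with hQdef
  have hQne : Q ≠ 0 := ne_of_gt hQpos
  set t := lam / Q with htdef
  have ht : 0 < t := div_pos hlam hQpos
  have hbeta' : ∀ j ∈ S0, Real.sign (bstar j) * beta0 j > Real.sign (bstar j) * bstar j * t := by
    intro j hj
    have h := hbeta j hj
    have heq : Real.sign (bstar j) * bstar j * (S0.card : ℝ) * lam /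
        ((n : ℝ) * ((S0.card : ℝ) * Q / n)) = Real.sign (bstar j) * bstar j * t := by
      rw [htdef]
      field_simp
    rwa [heq] at h
  have hbz : ∀ j ∈ S0, bstar j ≠ 0 := by
    intro j hj h0
    have := hbeta' j hj
    rw [h0] at this
    simp [Real.sign_zero] at this
  have hdiff : (beta0 - t • bstar) - beta0 = (-t) • bstar := by
    funext k; simp
  refine ⟨beta0 - t • bstar, fun j => ((X.transpose * X).mulVec bstar) j / Q, ?_, ?_, ?_, ?_⟩
  · intro j
    rw [hdiff, Matrix.mulVec_smul]
    simp only [Pi.smul_apply, smul_eq_mul]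
    rw [htdef]
    field_simp
    ring
  · intro j
    show |((X.transpose * X).mulVec bstar) j / Q| ≤ 1
    by_cases hj : j ∈ S0
    · rw [coordA X S0 bstar hcon hmin j hj (hbz j hj), ← hQdef,
        mul_div_cancel_left₀ _ hQne]
      rcases lt_or_gt_of_ne (hbz j hj) with h | h
      · simp [Real.sign_of_neg h]
      · simp [Real.sign_of_pos h]
    · by_cases hbj : bstar j = 0
      · rw [abs_div, abs_of_pos hQpos, div_le_one hQpos]
        exact coordC X S0 bstar hcon hmin j hj hbj
      · rw [coordB X S0 bstar hcon hmin j hj hbj, ← hQdef, neg_div,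
          mul_div_cancel_left₀ _ hQne, abs_neg]
        rcases lt_or_gt_of_ne hbj with h | h
        · simp [Real.sign_of_neg h]
        · simp [Real.sign_of_pos h]
  · rw [l1]
    apply Finset.sum_congr rfl
    intro j _
    show ((X.transpose * X).mulVec bstar) j / Q * ((beta0 - t • bstar) j) = |(beta0 - t • bstar) j|
    have hval : (beta0 - t • bstar) j = beta0 j - t * bstar j := by simp
    by_cases hj : j ∈ S0
    · have hbj := hbz j hj
      rw [coordA X S0 bstar hcon hmin j hj hbj, ← hQdef, mul_div_cancel_left₀ _ hQne]
      have hb' := hbeta' j hj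
      rcases lt_or_gt_of_ne hbj with h | h
      · rw [Real.sign_of_neg h] at hb' ⊢
        have hneg : (beta0 - t • bstar) j < 0 := by rw [hval]; nlinarith
        rw [abs_of_neg hneg]; ring
      · rw [Real.sign_of_pos h] at hb' ⊢
        have hpos : 0 < (beta0 - t • bstar) j := by rw [hval]; nlinarith
        rw [abs_of_pos hpos]; ring
    · have hb0 : beta0 j = 0 := by
        by_contra h; exact hj ((hS0 j).mpr h)
      by_cases hbj : bstar j = 0
      · rw [hval, hb0, hbj]; simp
      · rw [coordB X S0 bstar hcon hmin j hj hbj, ← hQdef, neg_div,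
          mul_div_cancel_left₀ _ hQne, hval, hb0]
        rcases lt_or_gt_of_ne hbj with h | h
        · rw [Real.sign_of_neg h]
          have h2 : 0 - t * bstar j > 0 := by nlinarith
          rw [abs_of_pos h2]; ring
        · rw [Real.sign_of_pos h]
          have h2 : 0 - t * bstar j < 0 := by nlinarith
          rw [abs_of_neg h2]; ring
  · rw [hdiff, qf_smul, htdef]
    field_simp
    ring
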